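/- arXiv:1909.09417 — 3 statements merged into one kernel-verified Lean document; each statement's English description precedes it below -/
import Mathlib

section
/- Accuracy of the smooth approximation: the distance between the minimizer w° of ∑_k p_k (J_k + R_k) and the minimizer w°_δ of ∑_k p_k (J_k + R_k^δ) satisfies ‖w° − w°_δ‖² ≤ (2δ/λ_L) ∑_k p_k d(r_k°), where r_k° ∈ ∂R_k(w°) are subgradients with ∑_k p_k (∇J_k(w°) + r_k°) = 0. -/
open Finset

lemma sc_bound {M N : ℕ} (p : Fin N → ℝ)
    (J : Fin N → EuclideanSpace ℝ (Fin M) → ℝ)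
    (gJ : Fin N → EuclideanSpace ℝ (Fin M) → EuclideanSpace ℝ (Fin M))
    (hJ : ∀ k w, HasGradientAt (J k) (gJ k w) w)
    (lamL : ℝ)
    (hsc : ∀ x y : EuclideanSpace ℝ (Fin M),
      lamL * ‖x - y‖ ^ 2 ≤ (inner ℝ (x - y) (∑ k, p k • (gJ k x - gJ k y)) : ℝ))
    (x y : EuclideanSpace ℝ (Fin M)) :
    ∑ k, p k * J k x + ∑ k, p k * (inner ℝ (gJ k x) (y - x) : ℝ)
      + lamL / 2 * ‖y - x‖ ^ 2 ≤ ∑ k, p k * J k y := by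
  set v := y - x with hv
  set c : ℝ → EuclideanSpace ℝ (Fin M) := fun t => x + t • v with hc
  have hcd : ∀ t : ℝ, HasDerivAt c v t := by
    intro t
    have h1 : HasDerivAt (fun t : ℝ => t • v) ((1:ℝ) • v) t :=
      (hasDerivAt_id t).smul_const v
    simpa [c] using h1.const_add x
  have hc0 : c 0 = x := by simp [c]
  have hc1 : c 1 = y := by simp [c, hv]
  set m : ℝ → ℝ := fun t => ∑ k, p k * (inner ℝ (gJ k (c t)) v : ℝ) with hm
  have hφk : ∀ (k : Fin N) (t : ℝ),
      HasDerivAt (fun s => J k (c s)) ((inner ℝ (gJ k (c t)) v : ℝ)) t := by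
    intro k t
    have hF : HasFDerivAt (J k) (InnerProductSpace.toDual ℝ _ (gJ k (c t))) (c t) := hJ k (c t)
    have := hF.comp_hasDerivAt t (hcd t)
    exact this
  have hφ : ∀ t : ℝ, HasDerivAt (fun s => ∑ k, p k * J k (c s)) (m t) t := by
    intro t
    exact HasDerivAt.fun_sum fun k _ => (hφk k t).const_mul (p k)
  have hmkey : ∀ t : ℝ, 0 ≤ t → lamL * t * ‖v‖ ^ 2 ≤ m t - m 0 := by
    intro t ht
    rcases eq_or_lt_of_le ht with h | h
    · simp [← h]
    have h1 := hsc (c t) (c 0)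
    have h2 : c t - c 0 = t • v := by simp [c]
    rw [h2, hc0] at h1
    have h3 : (inner ℝ (t • v) (∑ k, p k • (gJ k (c t) - gJ k x)) : ℝ)
        = t * (m t - m 0) := by
      rw [real_inner_smul_left, inner_sum]
      rw [hm]
      simp only [hc0]
      rw [← Finset.sum_sub_distrib]
      congr 1
      refine Finset.sum_congr rfl fun k _ => ?_
      rw [real_inner_smul_right, inner_sub_right]
      rw [real_inner_comm v (gJ k (c t)), real_inner_comm v (gJ k x)]
      ring
    rw [h3] at h1
    have h4 : ‖t • v‖ ^ 2 = t ^ 2 * ‖v‖ ^ 2 := by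
      rw [norm_smul]; simp [mul_pow, sq_abs]
    rw [h4] at h1
    nlinarith
  set χ : ℝ → ℝ := fun t => (∑ k, p k * J k (c t)) - m 0 * t - lamL / 2 * ‖v‖ ^ 2 * t ^ 2
    with hχdef
  have hχ : ∀ t : ℝ, HasDerivAt χ (m t - m 0 - lamL * ‖v‖ ^ 2 * t) t := by
    intro t
    have ha : HasDerivAt (fun s : ℝ => m 0 * s) (m 0) t := by
      simpa using (hasDerivAt_id t).const_mul (m 0)
    have hb : HasDerivAt (fun s : ℝ => lamL / 2 * ‖v‖ ^ 2 * s ^ 2)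
        (lamL / 2 * ‖v‖ ^ 2 * (2 * t)) t := by
      have := (hasDerivAt_pow 2 t).const_mul (lamL / 2 * ‖v‖ ^ 2)
      simpa [pow_one] using this
    have := ((hφ t).sub ha).sub hb
    exact this.congr_deriv (by ring)
  have hmono : MonotoneOn χ (Set.Icc (0:ℝ) 1) := by
    apply monotoneOn_of_deriv_nonneg (convex_Icc 0 1)
    · exact fun t _ => (hχ t).continuousAt.continuousWithinAt
    · exact fun t _ => (hχ t).differentiableAt.differentiableWithinAt
    · intro t ht
      rw [interior_Icc] at ht
      rw [(hχ t).deriv]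
      have := hmkey t ht.1.le
      nlinarith
  have h01 := hmono (Set.mem_Icc.2 ⟨le_refl 0, zero_le_one⟩)
    (Set.mem_Icc.2 ⟨zero_le_one, le_refl 1⟩) zero_le_one
  simp only [hχdef, hc0, hc1] at h01
  have hm0 : m 0 = ∑ k, p k * (inner ℝ (gJ k x) v : ℝ) := by simp [hm, hc0]
  rw [hm0] at h01
  nlinarith [h01]


/-- Accuracy of the smooth approximation. With `p k > 0`, `∑ p k = 1`,
differentiable convex `J k` whose weighted aggregate is `λL`-strongly convex, closed
convex `R k` with conjugates `Rs k`, a `1`-strongly convex proximity function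
`d ≥ ½‖·‖²`, smoothed regularizers `Rδ k w = sup_u {⟨w,u⟩ − Rs k u − δ d u}`,
`w0` the minimizer of `∑ p_k (J_k + R_k)` and `wδ` the minimizer of
`∑ p_k (J_k + Rδ_k)`, and subgradients `r k ∈ ∂R_k(w0)` with
`∑ p_k (∇J_k(w0) + r_k) = 0`, it holds that
`‖w0 − wδ‖² ≤ (2δ/λL) ∑ p_k d(r_k)`. -/
theorem stmt_8 {M N : ℕ}
    (p : Fin N → ℝ) (hp : ∀ k, 0 < p k) (hps : ∑ k, p k = 1)
    (J : Fin N → EuclideanSpace ℝ (Fin M) → ℝ)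
    (gJ : Fin N → EuclideanSpace ℝ (Fin M) → EuclideanSpace ℝ (Fin M))
    (hJ : ∀ k w, HasGradientAt (J k) (gJ k w) w)
    (hJconv : ∀ k, ConvexOn ℝ Set.univ (J k))
    (lamL : ℝ) (hlamL : 0 < lamL)
    (hsc : ∀ x y : EuclideanSpace ℝ (Fin M),
      lamL * ‖x - y‖ ^ 2 ≤ (inner ℝ (x - y) (∑ k, p k • (gJ k x - gJ k y)) : ℝ))
    (R : Fin N → EuclideanSpace ℝ (Fin M) → ℝ)
    (hRconv : ∀ k, ConvexOn ℝ Set.univ (R k))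
    (hRcl : ∀ k, LowerSemicontinuous (R k))
    (d : EuclideanSpace ℝ (Fin M) → ℝ)
    (hdconv : StrongConvexOn Set.univ 1 d) (hdcont : Continuous d)
    (hd2 : ∀ w, (1 / 2) * ‖w‖ ^ 2 ≤ d w)
    (Rs Rδ : Fin N → EuclideanSpace ℝ (Fin M) → ℝ)
    (hRs : ∀ k (v : EuclideanSpace ℝ (Fin M)),
      IsLUB {t : ℝ | ∃ u, t = (inner ℝ v u : ℝ) - R k u} (Rs k v))
    (δ : ℝ) (hδ : 0 < δ)
    (hRδ : ∀ k (w : EuclideanSpace ℝ (Fin M)),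
      IsLUB {t : ℝ | ∃ u, t = (inner ℝ w u : ℝ) - Rs k u - δ * d u} (Rδ k w))
    (w0 wδ : EuclideanSpace ℝ (Fin M))
    (hw0 : ∀ w, ∑ k, p k * (J k w0 + R k w0) ≤ ∑ k, p k * (J k w + R k w))
    (hwδ : ∀ w, ∑ k, p k * (J k wδ + Rδ k wδ) ≤ ∑ k, p k * (J k w + Rδ k w))
    (r : Fin N → EuclideanSpace ℝ (Fin M))
    (hr : ∀ k x, R k w0 + (inner ℝ (r k) (x - w0) : ℝ) ≤ R k x)
    (hstat : ∑ k, p k • (gJ k w0 + r k) = 0) :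
    ‖w0 - wδ‖ ^ 2 ≤ (2 * δ / lamL) * ∑ k, p k * d (r k) := by
  have h1 := sc_bound p J gJ hJ lamL hsc w0 wδ
  -- stationarity: rewrite the gradient term
  have hsum0 : ∑ k, p k • gJ k w0 = -∑ k, p k • r k := by
    have h := hstat
    simp only [smul_add] at h
    rw [Finset.sum_add_distrib] at h
    exact eq_neg_of_add_eq_zero_left h
  have h2 : ∑ k, p k * (inner ℝ (gJ k w0) (wδ - w0) : ℝ)
      = -∑ k, p k * (inner ℝ (r k) (wδ - w0) : ℝ) := by
    have ha : ∑ k, p k * (inner ℝ (gJ k w0) (wδ - w0) : ℝ)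
        = (inner ℝ (∑ k, p k • gJ k w0) (wδ - w0) : ℝ) := by
      rw [sum_inner]
      exact Finset.sum_congr rfl fun k _ => (real_inner_smul_left _ _ _).symm
    have hb : ∑ k, p k * (inner ℝ (r k) (wδ - w0) : ℝ)
        = (inner ℝ (∑ k, p k • r k) (wδ - w0) : ℝ) := by
      rw [sum_inner]
      exact Finset.sum_congr rfl fun k _ => (real_inner_smul_left _ _ _).symm
    rw [ha, hb, hsum0, inner_neg_left]
  -- optimality of wδ, expanded
  have h3 : ∑ k, p k * J k wδ + ∑ k, p k * Rδ k wδ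
      ≤ ∑ k, p k * J k w0 + ∑ k, p k * Rδ k w0 := by
    have := hwδ w0
    simpa [mul_add, Finset.sum_add_distrib] using this
  -- Rδ ≤ R at w0
  have h4 : ∀ k, Rδ k w0 ≤ R k w0 := by
    intro k
    apply (hRδ k w0).2
    rintro t ⟨u, rfl⟩
    have hfen : (inner ℝ u w0 : ℝ) - R k w0 ≤ Rs k u := (hRs k u).1 ⟨w0, rfl⟩
    have hd0 : 0 ≤ d u := le_trans (by positivity) (hd2 u)
    have : (inner ℝ w0 u : ℝ) = (inner ℝ u w0 : ℝ) := real_inner_comm _ _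
    nlinarith [mul_pos hδ (lt_of_lt_of_le (lt_of_le_of_lt (le_refl (0:ℝ)) hδ) (le_refl δ))]
  -- lower bound on Rδ at wδ
  have h5 : ∀ k, (inner ℝ (r k) (wδ - w0) : ℝ) + R k w0 - δ * d (r k) ≤ Rδ k wδ := by
    intro k
    have hmem : (inner ℝ wδ (r k) : ℝ) - Rs k (r k) - δ * d (r k) ≤ Rδ k wδ :=
      (hRδ k wδ).1 ⟨r k, rfl⟩
    have h6 : Rs k (r k) ≤ (inner ℝ (r k) w0 : ℝ) - R k w0 := by
      apply (hRs k (r k)).2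
      rintro t ⟨u, rfl⟩
      have := hr k u
      rw [inner_sub_right] at this
      linarith
    have hcomm : (inner ℝ wδ (r k) : ℝ) = (inner ℝ (r k) wδ : ℝ) := real_inner_comm _ _
    rw [inner_sub_right]
    linarith [hmem, h6, hcomm.le, hcomm.ge]
  -- sum the bounds
  have h4s : ∑ k, p k * Rδ k w0 ≤ ∑ k, p k * R k w0 :=
    Finset.sum_le_sum fun k _ => mul_le_mul_of_nonneg_left (h4 k) (hp k).le
  have h5s : ∑ k, p k * ((inner ℝ (r k) (wδ - w0) : ℝ) + R k w0 - δ * d (r k))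
      ≤ ∑ k, p k * Rδ k wδ :=
    Finset.sum_le_sum fun k _ => mul_le_mul_of_nonneg_left (h5 k) (hp k).le
  have hexp : ∑ k, p k * ((inner ℝ (r k) (wδ - w0) : ℝ) + R k w0 - δ * d (r k))
      = (∑ k, p k * (inner ℝ (r k) (wδ - w0) : ℝ)) + (∑ k, p k * R k w0)
        - δ * ∑ k, p k * d (r k) := by
    rw [Finset.mul_sum, ← Finset.sum_add_distrib, ← Finset.sum_sub_distrib]
    exact Finset.sum_congr rfl fun k _ => by ring
  rw [hexp] at h5s
  -- R sums cancel in the optimality chain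
  have hkey : lamL / 2 * ‖wδ - w0‖ ^ 2 ≤ δ * ∑ k, p k * d (r k) := by
    linarith [h1, h2.le, h2.ge, h3, h4s, h5s]
  have hnorm : ‖w0 - wδ‖ = ‖wδ - w0‖ := norm_sub_rev _ _
  rw [hnorm, div_mul_eq_mul_div, le_div_iff₀ hlamL]
  nlinarith [hkey]
end

section
/- The difference of aggregate cost values satisfies the upper bound F(w°) − F^δ(w°_δ) ≤ δ ∑_k p_k d(r_k°), where r_k° ∈ ∂R_k(w°) satisfy ∑_k p_k (∇J_k(w°) + r_k°) = 0. -/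
open Finset

lemma grad_ineq {M : ℕ} (f : EuclideanSpace ℝ (Fin M) → ℝ)
    (g x y : EuclideanSpace ℝ (Fin M))
    (hg : HasGradientAt f g x) (hc : ConvexOn ℝ Set.univ f) :
    f x + (inner ℝ g (y - x) : ℝ) ≤ f y := by
  set v := y - x with hv
  have hline : HasDerivAt (fun t : ℝ => x + t • v) v 0 := by
    simpa using ((hasDerivAt_id (0:ℝ)).smul_const v).const_add x
  have hφ : HasDerivAt (fun t : ℝ => f (x + t • v)) (inner ℝ g v : ℝ) 0 := by
    have hx0 : x + (0:ℝ) • v = x := by simp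
    have hfd : HasFDerivAt f ((InnerProductSpace.toDual ℝ _) g) (x + (0:ℝ) • v) := by
      rw [hx0]; exact hg.hasFDerivAt
    have := hfd.comp_hasDerivAt 0 hline
    exact this
  have hφconv : ConvexOn ℝ Set.univ (fun t : ℝ => f (x + t • v)) := by
    have := hc.comp_affineMap (AffineMap.lineMap x y : ℝ →ᵃ[ℝ] _)
    simp only [Set.preimage_univ] at this
    refine this.congr fun t _ => ?_
    simp [AffineMap.lineMap_apply, hv]; abel_nf
  have := hφconv.le_slope_of_hasDerivAt (Set.mem_univ (0:ℝ)) (Set.mem_univ (1:ℝ))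
    one_pos hφ
  rw [slope_def_field] at this
  simp only [one_smul, zero_smul, add_zero, sub_zero, div_one] at this
  have hxy : x + v = y := by simp [hv]
  rw [hxy] at this
  linarith


/-- Upper bound on the aggregate cost gap. In the same setting as the
lower bound (`F = ∑ p_k (J_k + R_k)`, `F^δ = ∑ p_k (J_k + Rδ_k)` with conjugate
smoothing, `w0` minimizing `F`, `wδ` minimizing `F^δ`), with subgradients
`r k ∈ ∂R_k(w0)` satisfying `∑ p_k (∇J_k(w0) + r_k) = 0`, one has
`F(w0) − F^δ(wδ) ≤ δ ∑ p_k d(r_k)`. -/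
theorem stmt_10 {M N : ℕ}
    (p : Fin N → ℝ) (hp : ∀ k, 0 < p k) (hps : ∑ k, p k = 1)
    (J : Fin N → EuclideanSpace ℝ (Fin M) → ℝ)
    (gJ : Fin N → EuclideanSpace ℝ (Fin M) → EuclideanSpace ℝ (Fin M))
    (hJ : ∀ k w, HasGradientAt (J k) (gJ k w) w)
    (hJconv : ∀ k, ConvexOn ℝ Set.univ (J k))
    (R : Fin N → EuclideanSpace ℝ (Fin M) → ℝ)
    (hRconv : ∀ k, ConvexOn ℝ Set.univ (R k))
    (hRcl : ∀ k, LowerSemicontinuous (R k))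
    (d : EuclideanSpace ℝ (Fin M) → ℝ)
    (hdconv : StrongConvexOn Set.univ 1 d) (hdcont : Continuous d)
    (hd2 : ∀ w, (1 / 2) * ‖w‖ ^ 2 ≤ d w)
    (Rs Rδ : Fin N → EuclideanSpace ℝ (Fin M) → ℝ)
    (hRs : ∀ k (v : EuclideanSpace ℝ (Fin M)),
      IsLUB {t : ℝ | ∃ u, t = (inner ℝ v u : ℝ) - R k u} (Rs k v))
    (δ : ℝ) (hδ : 0 < δ)
    (hRδ : ∀ k (w : EuclideanSpace ℝ (Fin M)),
      IsLUB {t : ℝ | ∃ u, t = (inner ℝ w u : ℝ) - Rs k u - δ * d u} (Rδ k w))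
    (w0 wδ : EuclideanSpace ℝ (Fin M))
    (hw0 : ∀ w, ∑ k, p k * (J k w0 + R k w0) ≤ ∑ k, p k * (J k w + R k w))
    (hwδ : ∀ w, ∑ k, p k * (J k wδ + Rδ k wδ) ≤ ∑ k, p k * (J k w + Rδ k w))
    (r : Fin N → EuclideanSpace ℝ (Fin M))
    (hr : ∀ k x, R k w0 + (inner ℝ (r k) (x - w0) : ℝ) ≤ R k x)
    (hstat : ∑ k, p k • (gJ k w0 + r k) = 0) :
    (∑ k, p k * (J k w0 + R k w0)) - (∑ k, p k * (J k wδ + Rδ k wδ)) ≤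
      δ * ∑ k, p k * d (r k) := by
  classical
  -- Fenchel equality at the subgradient
  have hRs_eq : ∀ k, Rs k (r k) = (inner ℝ (r k) w0 : ℝ) - R k w0 := by
    intro k
    refine le_antisymm ((hRs k (r k)).2 ?_) ((hRs k (r k)).1 ⟨w0, by simp⟩)
    rintro t ⟨u, rfl⟩
    have := hr k u
    rw [inner_sub_right] at this
    linarith
  -- lower bound on Rδ k wδ
  have hRδ_ge : ∀ k, R k w0 + (inner ℝ (r k) (wδ - w0) : ℝ) - δ * d (r k) ≤ Rδ k wδ := by
    intro k
    have h := (hRδ k wδ).1 (Set.mem_setOf.mpr ⟨r k, rfl⟩)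
    rw [hRs_eq k] at h
    have e1 : (inner ℝ (r k) (wδ - w0) : ℝ) = (inner ℝ (r k) wδ : ℝ) - (inner ℝ (r k) w0 : ℝ) :=
      inner_sub_right _ _ _
    have e2 : (inner ℝ wδ (r k) : ℝ) = (inner ℝ (r k) wδ : ℝ) := real_inner_comm _ _
    linarith
  -- per-agent key inequality
  have hkey : ∀ k, J k w0 + R k w0 ≤
      J k wδ + Rδ k wδ + δ * d (r k) - (inner ℝ (gJ k w0 + r k) (wδ - w0) : ℝ) := by
    intro k
    have h1 := grad_ineq (J k) (gJ k w0) w0 wδ (hJ k w0) (hJconv k)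
    have h2 := hRδ_ge k
    rw [inner_add_left]
    linarith
  -- the stationarity term vanishes
  have hzero : ∑ k, p k * (inner ℝ (gJ k w0 + r k) (wδ - w0) : ℝ) = 0 := by
    have h : ∑ k, (inner ℝ (p k • (gJ k w0 + r k)) (wδ - w0) : ℝ)
        = (inner ℝ (∑ k, p k • (gJ k w0 + r k)) (wδ - w0) : ℝ) :=
      (sum_inner _ _ _).symm
    rw [hstat, inner_zero_left] at h
    rw [← h]
    exact Finset.sum_congr rfl fun k _ => (real_inner_smul_left _ _ _).symm
  have hsum : ∑ k, p k * (J k w0 + R k w0) ≤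
      ∑ k, p k * (J k wδ + Rδ k wδ + δ * d (r k) - (inner ℝ (gJ k w0 + r k) (wδ - w0) : ℝ)) :=
    Finset.sum_le_sum fun k _ => mul_le_mul_of_nonneg_left (hkey k) (hp k).le
  have hexp : ∑ k, p k * (J k wδ + Rδ k wδ + δ * d (r k) - (inner ℝ (gJ k w0 + r k) (wδ - w0) : ℝ))
      = (∑ k, p k * (J k wδ + Rδ k wδ)) + δ * (∑ k, p k * d (r k))
        - ∑ k, p k * (inner ℝ (gJ k w0 + r k) (wδ - w0) : ℝ) := by
    rw [Finset.mul_sum, ← Finset.sum_add_distrib, ← Finset.sum_sub_distrib]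
    exact Finset.sum_congr rfl fun k _ => by ring
  rw [hexp, hzero] at hsum
  linarith
end

section
/- Inverse scaling of the stability matrix: if Γ(μ) has the asymptotic form I − Γ(μ) = [[μλ_L − O(μ²), −O(μ^{2κ})], [−O(μ^{1+2κ}), (1−ρ) − O(μ^{1+2κ})]] with λ_L > 0, 0 < ρ < 1, 1/4 < κ < 1/2, then (I − Γ(μ))^{−1} [O(μ²), O(μ^{1+2κ})]^T ⪯ [O(μ), O(μ^{1+2κ})]^T for sufficiently small μ, i.e., both components of the limiting error bound are O(μ) and O(μ^{1+2κ}) respectively. -/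
set_option maxHeartbeats 2000000 in
/-- Inverse scaling of the stability matrix. With
`I − Γ(μ) = [[μλL − a₁₁μ², −a₁₂μ^{2κ}], [−a₂₁μ^{1+2κ}, (1−ρ) − a₂₂μ^{1+2κ}]]`,
`λL > 0`, `0 < ρ < 1`, `1/4 < κ < 1/2` and nonnegative constants `aᵢⱼ, C₁, C₂`, there
is a constant `C > 0` independent of `μ` such that for all sufficiently small `μ > 0`,
any solution `x` of `(I − Γ(μ)) x = (C₁μ², C₂μ^{1+2κ})` satisfies `x 0 ≤ Cμ` and
`x 1 ≤ Cμ^{1+2κ}`. -/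
theorem stmt_18 (lamL ρ κ a11 a12 a21 a22 C₁ C₂ : ℝ)
    (hlamL : 0 < lamL) (hρ0 : 0 < ρ) (hρ1 : ρ < 1)
    (hκ0 : 1 / 4 < κ) (hκ1 : κ < 1 / 2)
    (ha11 : 0 ≤ a11) (ha12 : 0 ≤ a12) (ha21 : 0 ≤ a21) (ha22 : 0 ≤ a22)
    (hC₁ : 0 ≤ C₁) (hC₂ : 0 ≤ C₂) :
    ∃ C > 0, ∃ μ₀ > 0, ∀ μ : ℝ, 0 < μ → μ < μ₀ →
      ∀ x : Fin 2 → ℝ,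
        (!![μ * lamL - a11 * μ ^ 2, -(a12 * μ ^ (2 * κ));
            -(a21 * μ ^ (1 + 2 * κ)), (1 - ρ) - a22 * μ ^ (1 + 2 * κ)] :
          Matrix (Fin 2) (Fin 2) ℝ).mulVec x = ![C₁ * μ ^ 2, C₂ * μ ^ (1 + 2 * κ)] →
        x 0 ≤ C * μ ∧ x 1 ≤ C * μ ^ (1 + 2 * κ) := by
  have hρ' : 0 < 1 - ρ := by linarith
  set d : ℝ := lamL * (1 - ρ) / 8 with hd
  have hdpos : 0 < d := by positivity
  refine ⟨(C₁ + a12 * C₂ + lamL * C₂ + a21 * C₁ + 1) / d, by positivity,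
    min 1 (min (lamL / (2 * (a11 + 1))) (min ((1 - ρ) / (2 * (a22 + 1)))
      (lamL * (1 - ρ) / (8 * (a12 * a21 + 1))))), by positivity, ?_⟩
  intro μ hμ hμ0 x hx
  set C : ℝ := (C₁ + a12 * C₂ + lamL * C₂ + a21 * C₁ + 1) / d with hC
  have hCd : C * d = C₁ + a12 * C₂ + lamL * C₂ + a21 * C₁ + 1 := by
    rw [hC]; exact div_mul_cancel₀ _ hdpos.ne'
  have hCpos : 0 < C := by positivity
  have hμ1 : μ ≤ 1 := le_of_lt (lt_of_lt_of_le hμ0 (min_le_left _ _))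
  have hm1 : μ < lamL / (2 * (a11 + 1)) :=
    lt_of_lt_of_le hμ0 ((min_le_right _ _).trans (min_le_left _ _))
  have hm2 : μ < (1 - ρ) / (2 * (a22 + 1)) :=
    lt_of_lt_of_le hμ0 ((min_le_right _ _).trans ((min_le_right _ _).trans (min_le_left _ _)))
  have hm3 : μ < lamL * (1 - ρ) / (8 * (a12 * a21 + 1)) :=
    lt_of_lt_of_le hμ0 ((min_le_right _ _).trans ((min_le_right _ _).trans (min_le_right _ _)))
  have h1 : a11 * μ ≤ lamL / 2 := by
    have := (lt_div_iff₀ (by positivity : (0:ℝ) < 2 * (a11 + 1))).mp hm1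
    nlinarith
  have h2 : a22 * μ ≤ (1 - ρ) / 2 := by
    have := (lt_div_iff₀ (by positivity : (0:ℝ) < 2 * (a22 + 1))).mp hm2
    nlinarith
  have h3 : a12 * a21 * μ ≤ lamL * (1 - ρ) / 8 := by
    have := (lt_div_iff₀ (by positivity : (0:ℝ) < 8 * (a12 * a21 + 1))).mp hm3
    nlinarith
  clear hμ0 hm1 hm2 hm3
  -- rpow facts
  set P : ℝ := μ ^ (1 + 2 * κ) with hPdef
  set Q : ℝ := μ ^ (2 * κ) with hQdef
  have hPpos : 0 < P := Real.rpow_pos_of_pos hμ _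
  have hQpos : 0 < Q := Real.rpow_pos_of_pos hμ _
  have hPle : P ≤ μ := by
    have := Real.rpow_le_rpow_of_exponent_ge hμ hμ1 (by linarith : (1:ℝ) ≤ 1 + 2 * κ)
    rwa [Real.rpow_one] at this
  have hQP : Q * P ≤ μ ^ 2 := by
    have h := Real.rpow_le_rpow_of_exponent_ge hμ hμ1
      (by linarith : (2:ℝ) ≤ 2 * κ + (1 + 2 * κ))
    calc Q * P = μ ^ (2 * κ + (1 + 2 * κ)) := (Real.rpow_add hμ _ _).symm
      _ ≤ μ ^ (2:ℝ) := h
      _ = μ ^ 2 := by rw [show (2:ℝ) = ((2:ℕ):ℝ) by norm_num, Real.rpow_natCast]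
  -- extract equations
  have E1 := congrFun hx 0
  have E2 := congrFun hx 1
  simp only [Matrix.mulVec, dotProduct, Fin.sum_univ_two, Matrix.cons_val',
    Matrix.cons_val_zero, Matrix.cons_val_one, Matrix.head_cons, Matrix.empty_val',
    Matrix.cons_val_fin_one, Matrix.head_fin_const, Matrix.of_apply] at E1 E2
  clear hx
  set x0 := x 0
  set x1 := x 1
  -- determinant lower bound
  have hA : μ * lamL / 2 ≤ μ * lamL - a11 * μ ^ 2 := by
    nlinarith [mul_le_mul_of_nonneg_left h1 hμ.le]
  have hB : (1 - ρ) / 2 ≤ (1 - ρ) - a22 * P := by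
    have := mul_le_mul_of_nonneg_left hPle ha22
    linarith
  set D : ℝ := (μ * lamL - a11 * μ ^ 2) * ((1 - ρ) - a22 * P) - a12 * Q * (a21 * P) with hDdef
  have hDge : d * μ ≤ D := by
    have h4 : a12 * Q * (a21 * P) ≤ a12 * a21 * μ ^ 2 := by
      nlinarith [mul_le_mul_of_nonneg_left hQP (mul_nonneg ha12 ha21)]
    have h5 : μ * lamL / 2 * ((1 - ρ) / 2) ≤ (μ * lamL - a11 * μ ^ 2) * ((1 - ρ) - a22 * P) :=
      mul_le_mul hA hB (by positivity) (le_trans (by positivity) hA)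
    nlinarith [mul_le_mul_of_nonneg_right h3 hμ.le]
  have hDpos : 0 < D := lt_of_lt_of_le (mul_pos hdpos hμ) hDge
  -- Cramer
  have hx0 : D * x0 = ((1 - ρ) - a22 * P) * (C₁ * μ ^ 2) + a12 * Q * (C₂ * P) := by
    rw [hDdef]; linear_combination ((1 - ρ) - a22 * P) * E1 + a12 * Q * E2
  have hx1 : D * x1 = (μ * lamL - a11 * μ ^ 2) * (C₂ * P) + a21 * P * (C₁ * μ ^ 2) := by
    rw [hDdef]; linear_combination (μ * lamL - a11 * μ ^ 2) * E2 + a21 * P * E1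
  constructor
  · have hN : D * x0 ≤ (C₁ + a12 * C₂) * μ ^ 2 := by
      rw [hx0]
      have t1 : ((1 - ρ) - a22 * P) * (C₁ * μ ^ 2) ≤ C₁ * μ ^ 2 := by
        have : (1 - ρ) - a22 * P ≤ 1 := by nlinarith [mul_nonneg ha22 hPpos.le]
        nlinarith [mul_nonneg hC₁ (sq_nonneg μ)]
      have t2 : a12 * Q * (C₂ * P) ≤ a12 * C₂ * μ ^ 2 := by
        nlinarith [mul_le_mul_of_nonneg_left hQP (mul_nonneg ha12 hC₂)]
      linarith
    have hle : C₁ + a12 * C₂ ≤ C * d := by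
      rw [hCd]; linarith [mul_nonneg hlamL.le hC₂, mul_nonneg ha21 hC₁]
    have key : D * x0 ≤ D * (C * μ) := by
      have h6 : (C₁ + a12 * C₂) * μ ^ 2 ≤ C * d * μ ^ 2 :=
        mul_le_mul_of_nonneg_right hle (sq_nonneg μ)
      have h7 : (C * μ) * (d * μ) ≤ (C * μ) * D :=
        mul_le_mul_of_nonneg_left hDge (mul_pos hCpos hμ).le
      have h8 : C * d * μ ^ 2 = (C * μ) * (d * μ) := by ring
      have h9 : (C * μ) * D = D * (C * μ) := mul_comm _ _
      linarith
    exact le_of_mul_le_mul_left key hDpos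
  · have hN : D * x1 ≤ (lamL * C₂ + a21 * C₁) * (μ * P) := by
      rw [hx1]
      have t1 : (μ * lamL - a11 * μ ^ 2) * (C₂ * P) ≤ lamL * C₂ * (μ * P) := by
        nlinarith [mul_nonneg (mul_nonneg ha11 (sq_nonneg μ)) (mul_nonneg hC₂ hPpos.le)]
      have t2 : a21 * P * (C₁ * μ ^ 2) ≤ a21 * C₁ * (μ * P) := by
        have hμ2 : μ ^ 2 ≤ μ := by nlinarith
        nlinarith [mul_le_mul_of_nonneg_left hμ2 (mul_nonneg (mul_nonneg ha21 hC₁) hPpos.le)]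
      linarith
    have hle : lamL * C₂ + a21 * C₁ ≤ C * d := by
      rw [hCd]; linarith [mul_nonneg ha12 hC₂]
    have key : D * x1 ≤ D * (C * P) := by
      have h6 : (lamL * C₂ + a21 * C₁) * (μ * P) ≤ C * d * (μ * P) :=
        mul_le_mul_of_nonneg_right hle (mul_pos hμ hPpos).le
      have h7 : (C * P) * (d * μ) ≤ (C * P) * D :=
        mul_le_mul_of_nonneg_left hDge (mul_pos hCpos hPpos).le
      have h8 : C * d * (μ * P) = (C * P) * (d * μ) := by ring
      have h9 : (C * P) * D = D * (C * P) := mul_comm _ _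
      linarith
    exact le_of_mul_le_mul_left key hDpos
end
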